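/- Spectrum of the linearization at the 1+1+1 escape equilibria of the regularized positive-energy system (the computational core of Theorem 5.5): for every ṽ₀ ∈ ℝ and s̃₀ ∈ (−1,1), the point (R̃, ṽ, s̃, ũ) = (0, ṽ₀, s̃₀, 0) is an equilibrium of the regularized positive-energy system, and the Jacobian matrix of its vector field at this point has characteristic polynomial ξ²(ξ + (1 − s̃₀²)ṽ₀)², i.e. eigenvalue 0 with algebraic multiplicity 2 and eigenvalue −(1 − s̃₀²)ṽ₀ with algebraic multiplicity 2. In particular, for h > 0, at the equilibria (0, ±√(2h), s̃₀, 0) the nonzero eigenvalue ∓(1 − s̃₀²)√(2h) has algebraic multiplicity 2. -/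

import Mathlib

open Real Polynomial Filter

lemma aux_hasDerivAt_abs_rpow (p : ℝ) (hp : 1 < p) :
    HasDerivAt (fun x : ℝ => |x| ^ p) 0 0 := by
  rw [hasDerivAt_iff_tendsto_slope]
  have hb : Tendsto (fun x : ℝ => |x| ^ (p-1)) (nhdsWithin 0 {(0:ℝ)}ᶜ) (nhds 0) := by
    have hc : ContinuousAt (fun x : ℝ => |x| ^ (p-1)) 0 := by
      apply ContinuousAt.comp (g := fun y : ℝ => y ^ (p-1))
      · exact Real.continuousAt_rpow_const _ _ (Or.inr (by linarith))
      · exact continuous_abs.continuousAt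
    have := hc.tendsto
    simp only [abs_zero, Real.zero_rpow (by linarith : p - 1 ≠ 0)] at this
    exact this.mono_left nhdsWithin_le_nhds
  apply squeeze_zero_norm' _ hb
  filter_upwards [self_mem_nhdsWithin] with x hx
  have hx0 : x ≠ 0 := hx
  have habs : (0:ℝ) < |x| := abs_pos.mpr hx0
  have h1 : slope (fun x : ℝ => |x| ^ p) 0 x = |x| ^ p / x := by
    simp [slope, Real.zero_rpow (by linarith : p ≠ 0), div_eq_inv_mul]
  rw [h1, Real.norm_eq_abs, abs_div, abs_of_nonneg (Real.rpow_nonneg (abs_nonneg x) p)]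
  rw [Real.rpow_sub habs, Real.rpow_one]

/-- Spectrum of the linearization at the 1+1+1 escape equilibria of
the regularized positive-energy system: `(0, ṽ₀, s̃₀, 0)` is an equilibrium and the
Jacobian there has characteristic polynomial `ξ²(ξ + (1 − s̃₀²)ṽ₀)²`, i.e.
eigenvalues `0` and `−(1 − s̃₀²)ṽ₀`, each of algebraic multiplicity 2. -/
theorem positive_energy_linearization_spectrum
    (a b : ℝ) (ha : 4 < a) (hab : a < b - 1)
    (lam : ℝ) (hlam : 0 < lam)
    (U V : ℝ → ℝ)
    (hUpos : ∀ s ∈ Set.Ioo (-1 : ℝ) 1, 0 < U s)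
    (hVpos : ∀ s ∈ Set.Ioo (-1 : ℝ) 1, 0 < V s)
    (hU1 : ContDiffOn ℝ 1 U (Set.Ioo (-1 : ℝ) 1))
    (hV1 : ContDiffOn ℝ 1 V (Set.Ioo (-1 : ℝ) 1))
    (FR Fv Fs Fu : ℝ → ℝ → ℝ → ℝ → ℝ)
    (hFR : ∀ R v s u : ℝ, FR R v s u = (2 * s / lam) * u * R - (1 - s ^ 2) * R * v)
    (hFv : ∀ R v s u : ℝ, Fv R v s u = (1 - s ^ 2) *
      (u ^ 2 - a * |R| ^ a * (1 - s ^ 2) ^ a * U s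
        + b * |R| ^ b * (1 - s ^ 2) ^ b * V s))
    (hFs : ∀ R v s u : ℝ, Fs R v s u = (1 / lam) * (1 - s ^ 2) * u)
    (hFu : ∀ R v s u : ℝ, Fu R v s u = -((1 - s ^ 2) * u * v)
      + (1 / lam) * (|R| ^ a * (1 - s ^ 2) ^ (a + 1) * deriv U s
        - |R| ^ b * (1 - s ^ 2) ^ (b + 1) * deriv V s))
    (v0 s0 : ℝ) (hs0 : s0 ∈ Set.Ioo (-1 : ℝ) 1)
    (J : Matrix (Fin 4) (Fin 4) ℝ)
    (hJ : J = Matrix.of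
      ![![deriv (fun R => FR R v0 s0 0) 0, deriv (fun v => FR 0 v s0 0) v0,
          deriv (fun s => FR 0 v0 s 0) s0, deriv (fun u => FR 0 v0 s0 u) 0],
        ![deriv (fun R => Fv R v0 s0 0) 0, deriv (fun v => Fv 0 v s0 0) v0,
          deriv (fun s => Fv 0 v0 s 0) s0, deriv (fun u => Fv 0 v0 s0 u) 0],
        ![deriv (fun R => Fs R v0 s0 0) 0, deriv (fun v => Fs 0 v s0 0) v0,
          deriv (fun s => Fs 0 v0 s 0) s0, deriv (fun u => Fs 0 v0 s0 u) 0],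
        ![deriv (fun R => Fu R v0 s0 0) 0, deriv (fun v => Fu 0 v s0 0) v0,
          deriv (fun s => Fu 0 v0 s 0) s0, deriv (fun u => Fu 0 v0 s0 u) 0]]) :
    (FR 0 v0 s0 0 = 0 ∧ Fv 0 v0 s0 0 = 0 ∧ Fs 0 v0 s0 0 = 0 ∧ Fu 0 v0 s0 0 = 0) ∧
    J.charpoly = X ^ 2 * (X + C ((1 - s0 ^ 2) * v0)) ^ 2 := by
  have za : (0:ℝ) ^ a = 0 := by rw [Real.zero_rpow]; linarith
  have zb : (0:ℝ) ^ b = 0 := by rw [Real.zero_rpow]; linarith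
  have ha0 : |(0:ℝ)| ^ a = 0 := by rw [abs_zero]; exact za
  have hb0 : |(0:ℝ)| ^ b = 0 := by rw [abs_zero]; exact zb
  have hda := aux_hasDerivAt_abs_rpow a (by linarith)
  have hdb := aux_hasDerivAt_abs_rpow b (by linarith)
  refine ⟨⟨?_, ?_, ?_, ?_⟩, ?_⟩
  · simp [hFR]
  · simp [hFv, ha0, hb0, za, zb]
  · simp [hFs]
  · simp [hFu, ha0, hb0, za, zb]
  -- the sixteen Jacobian entries
  have d00 : deriv (fun R => FR R v0 s0 0) 0 = -((1 - s0 ^ 2) * v0) := by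
    simp only [hFR]
    have h1 : HasDerivAt (fun R : ℝ => 2 * s0 / lam * 0 * R) (2 * s0 / lam * 0 * 1) 0 :=
      (hasDerivAt_id 0).const_mul _
    have h2 : HasDerivAt (fun R : ℝ => (1 - s0 ^ 2) * R * v0) ((1 - s0 ^ 2) * 1 * v0) 0 :=
      ((hasDerivAt_id 0).const_mul _).mul_const _
    exact (h1.sub h2).deriv.trans (by ring)
  have d01 : deriv (fun v => FR 0 v s0 0) v0 = 0 := by simp [hFR]
  have d02 : deriv (fun s => FR 0 v0 s 0) s0 = 0 := by simp [hFR]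
  have d03 : deriv (fun u => FR 0 v0 s0 u) 0 = 0 := by simp [hFR]
  have d10 : deriv (fun R => Fv R v0 s0 0) 0 = 0 := by
    simp only [hFv]
    have h1 : HasDerivAt (fun R : ℝ => a * |R| ^ a * (1 - s0 ^ 2) ^ a * U s0)
        (a * 0 * (1 - s0 ^ 2) ^ a * U s0) 0 := ((hda.const_mul a).mul_const _).mul_const _
    have h2 : HasDerivAt (fun R : ℝ => b * |R| ^ b * (1 - s0 ^ 2) ^ b * V s0)
        (b * 0 * (1 - s0 ^ 2) ^ b * V s0) 0 := ((hdb.const_mul b).mul_const _).mul_const _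
    have h := (((hasDerivAt_const (0:ℝ) ((0:ℝ) ^ 2)).sub h1).add h2).const_mul (1 - s0 ^ 2)
    exact h.deriv.trans (by ring)
  have d11 : deriv (fun v => Fv 0 v s0 0) v0 = 0 := by simp [hFv, ha0, hb0, za, zb]
  have d12 : deriv (fun s => Fv 0 v0 s 0) s0 = 0 := by simp [hFv, ha0, hb0, za, zb]
  have d13 : deriv (fun u => Fv 0 v0 s0 u) 0 = 0 := by
    simp only [hFv, ha0, hb0]
    have h := (((hasDerivAt_pow 2 (0:ℝ)).sub_const
        (a * 0 * (1 - s0 ^ 2) ^ a * U s0)).add_const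
        (b * 0 * (1 - s0 ^ 2) ^ b * V s0)).const_mul (1 - s0 ^ 2)
    rw [h.deriv]; norm_num
  have d20 : deriv (fun R => Fs R v0 s0 0) 0 = 0 := by simp [hFs]
  have d21 : deriv (fun v => Fs 0 v s0 0) v0 = 0 := by simp [hFs]
  have d22 : deriv (fun s => Fs 0 v0 s 0) s0 = 0 := by simp [hFs]
  have d23 : deriv (fun u => Fs 0 v0 s0 u) 0 = 1 / lam * (1 - s0 ^ 2) := by
    simp only [hFs]
    have h : HasDerivAt (fun u : ℝ => 1 / lam * (1 - s0 ^ 2) * u)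
        (1 / lam * (1 - s0 ^ 2) * 1) 0 := (hasDerivAt_id 0).const_mul _
    rw [h.deriv]; ring
  have d30 : deriv (fun R => Fu R v0 s0 0) 0 = 0 := by
    simp only [hFu]
    have h1 : HasDerivAt (fun R : ℝ => |R| ^ a * (1 - s0 ^ 2) ^ (a + 1) * deriv U s0)
        (0 * (1 - s0 ^ 2) ^ (a + 1) * deriv U s0) 0 := (hda.mul_const _).mul_const _
    have h2 : HasDerivAt (fun R : ℝ => |R| ^ b * (1 - s0 ^ 2) ^ (b + 1) * deriv V s0)
        (0 * (1 - s0 ^ 2) ^ (b + 1) * deriv V s0) 0 := (hdb.mul_const _).mul_const _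
    have h := ((h1.sub h2).const_mul (1 / lam)).const_add (-((1 - s0 ^ 2) * 0 * v0))
    exact h.deriv.trans (by ring)
  have d31 : deriv (fun v => Fu 0 v s0 0) v0 = 0 := by simp [hFu, ha0, hb0, za, zb]
  have d32 : deriv (fun s => Fu 0 v0 s 0) s0 = 0 := by simp [hFu, ha0, hb0, za, zb]
  have d33 : deriv (fun u => Fu 0 v0 s0 u) 0 = -((1 - s0 ^ 2) * v0) := by
    simp only [hFu]
    have h : HasDerivAt (fun u : ℝ => -((1 - s0 ^ 2) * u * v0)
        + 1 / lam * (|(0:ℝ)| ^ a * (1 - s0 ^ 2) ^ (a + 1) * deriv U s0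
          - |(0:ℝ)| ^ b * (1 - s0 ^ 2) ^ (b + 1) * deriv V s0))
        (-((1 - s0 ^ 2) * 1 * v0)) 0 :=
      ((((hasDerivAt_id (0:ℝ)).const_mul (1 - s0 ^ 2)).mul_const v0).neg).add_const _
    rw [h.deriv]; ring
  have hJ2 : J = Matrix.of
      ![![-((1 - s0 ^ 2) * v0), 0, 0, 0],
        ![0, 0, 0, 0],
        ![0, 0, 0, 1 / lam * (1 - s0 ^ 2)],
        ![0, 0, 0, -((1 - s0 ^ 2) * v0)]] := by
    rw [hJ, d00, d01, d02, d03, d10, d11, d12, d13, d20, d21, d22, d23, d30, d31, d32, d33]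
  have hcm : Matrix.charmatrix (!![-((1 - s0 ^ 2) * v0), 0, 0, 0; 0, 0, 0, 0;
        0, 0, 0, 1 / lam * (1 - s0 ^ 2); 0, 0, 0, -((1 - s0 ^ 2) * v0)]) =
      !![X + C ((1 - s0 ^ 2) * v0), 0, 0, 0; 0, X, 0, 0;
        0, 0, X, -C (1 / lam * (1 - s0 ^ 2)); 0, 0, 0, X + C ((1 - s0 ^ 2) * v0)] := by
    refine Matrix.ext fun i j => ?_
    fin_cases i <;> fin_cases j <;>
      simp [Matrix.charmatrix_apply, Matrix.diagonal_apply, map_neg, sub_neg_eq_add,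
        Matrix.vecHead, Matrix.vecTail]
  rw [hJ2, Matrix.charpoly, hcm]
  simp [Matrix.det_succ_row_zero, Fin.sum_univ_succ]
  ring
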